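/- If X_1,...,X_n (n ≥ 2) are iid nonnegative random variables with mean μ ∈ (0,∞), then E[(min{X_1,...,X_n})^n] ≤ μ^n, with equality if and only if there is p ∈ (0,1] such that X_1 takes the values 0 and μ/p with probabilities 1−p and p. -/

import Mathlib

open MeasureTheory ProbabilityTheory

lemma aux_prod_integral {Ω : Type*} [MeasurableSpace Ω] (P : Measure Ω)
    [IsProbabilityMeasure P] {ι : Type*} (X : ι → Ω → ℝ)
    (hindep : iIndepFun X P)
    (hmeas : ∀ i, Measurable (X i)) (hint : ∀ i, Integrable (X i) P)
    (s : Finset ι) :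
    Integrable (fun ω => ∏ i ∈ s, X i ω) P ∧
      ∫ ω, ∏ i ∈ s, X i ω ∂P = ∏ i ∈ s, ∫ ω, X i ω ∂P := by
  classical
  induction s using Finset.induction_on with
  | empty => simp
  | @insert a s ha ih =>
    have hIndep : IndepFun (fun ω => ∏ i ∈ s, X i ω) (X a) P := by
      have := hindep.indepFun_finsetProd_of_notMem hmeas ha
      simpa [Finset.prod_fn] using this
    have h1 : Integrable ((fun ω => ∏ i ∈ s, X i ω) * X a) P :=
      hIndep.integrable_mul ih.1 (hint a)
    have h2 := hIndep.integral_mul_eq_mul_integral ih.1.aestronglyMeasurable (hint a).aestronglyMeasurable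
    constructor
    · have : (fun ω => ∏ i ∈ insert a s, X i ω)
          = (fun ω => ∏ i ∈ s, X i ω) * X a := by
        funext ω; simp [Finset.prod_insert ha, mul_comm]
      rw [this]; exact h1
    · rw [Finset.prod_insert ha]
      have : (fun ω => ∏ i ∈ insert a s, X i ω)
          = (fun ω => ∏ i ∈ s, X i ω) * X a := by
        funext ω; simp [Finset.prod_insert ha, mul_comm]
      calc ∫ ω, ∏ i ∈ insert a s, X i ω ∂P
          = ∫ ω, ((fun ω => ∏ i ∈ s, X i ω) * X a) ω ∂P := by rw [this]
        _ = (∫ ω, ∏ i ∈ s, X i ω ∂P) * ∫ ω, X a ω ∂P := h2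
        _ = (∫ ω, X a ω ∂P) * ∏ i ∈ s, ∫ ω, X i ω ∂P := by rw [ih.2, mul_comm]

lemma aux_dirac {m : Measure ℝ} [IsFiniteMeasure m] (h0 : m Set.univ ≠ 0)
    (h : (m.prod m) {p : ℝ × ℝ | p.1 ≠ p.2} = 0) :
    ∃ c : ℝ, m {c}ᶜ = 0 := by
  have hsm : MeasurableSet {p : ℝ × ℝ | p.1 ≠ p.2} :=
    (isClosed_diagonal.measurableSet).compl
  rw [Measure.prod_apply hsm] at h
  have hmeasf : Measurable fun x => m (Prod.mk x ⁻¹' {p : ℝ × ℝ | p.1 ≠ p.2}) :=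
    measurable_measure_prodMk_left hsm
  rw [lintegral_eq_zero_iff hmeasf] at h
  have hne : (ae m).NeBot := ae_neBot.mpr (by
    intro hm; exact h0 (by simp [hm]))
  obtain ⟨c, hc⟩ := h.exists
  refine ⟨c, ?_⟩
  have : {c}ᶜ = Prod.mk c ⁻¹' {p : ℝ × ℝ | p.1 ≠ p.2} := by
    ext x; simp [eq_comm]
  rw [this]; exact hc

lemma aux_eq_of_prod {n : ℕ} (f : Fin n → ℝ) (m : ℝ) (hm : 0 < m)
    (hle : ∀ i, m ≤ f i) (hprod : ∏ i, f i = m ^ n) (j : Fin n) : f j = m := by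
  refine le_antisymm ?_ (hle j)
  have hn : 0 < n := j.pos
  have h1 : m ^ (n - 1) ≤ ∏ i ∈ Finset.univ.erase j, f i := by
    calc m ^ (n - 1) = ∏ _i ∈ Finset.univ.erase j, m := by
          rw [Finset.prod_const, Finset.card_erase_of_mem (Finset.mem_univ j),
            Finset.card_univ, Fintype.card_fin]
      _ ≤ _ := Finset.prod_le_prod (fun i _ => hm.le) (fun i _ => hle i)
  have h2 : f j * m ^ (n - 1) ≤ m ^ n := by
    calc f j * m ^ (n - 1) ≤ f j * ∏ i ∈ Finset.univ.erase j, f i :=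
          mul_le_mul_of_nonneg_left h1 (hm.le.trans (hle j))
      _ = ∏ i, f i := Finset.mul_prod_erase _ _ (Finset.mem_univ j)
      _ = m ^ n := hprod
  have h3 : m ^ n = m ^ (n - 1) * m := by
    conv_lhs => rw [show n = (n - 1) + 1 by omega]
    rw [pow_succ]
  have hpos : 0 < m ^ (n - 1) := pow_pos hm _
  nlinarith [h2, h3, hpos]

theorem moment_min_le_pow_mean_iid
    {Ω : Type*} [MeasurableSpace Ω] (P : Measure Ω) [IsProbabilityMeasure P]
    {n : ℕ} (hn : 2 ≤ n) (X : Fin n → Ω → ℝ) (μ : ℝ) (hμ : 0 < μ)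
    (hmeas : ∀ i, Measurable (X i))
    (hnonneg : ∀ i ω, 0 ≤ X i ω)
    (hindep : iIndepFun X P)
    (hident : ∀ i j, IdentDistrib (X i) (X j) P P)
    (hint : ∀ i, Integrable (X i) P)
    (hmean : ∀ i, ∫ ω, X i ω ∂P = μ) :
    (∫ ω, (⨅ i, X i ω) ^ n ∂P ≤ μ ^ n) ∧
    (∫ ω, (⨅ i, X i ω) ^ n ∂P = μ ^ n ↔
      ∃ p : ℝ, 0 < p ∧ p ≤ 1 ∧
        Measure.map (X ⟨0, by omega⟩) P =
          ENNReal.ofReal (1 - p) • Measure.dirac (0 : ℝ) +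
            ENNReal.ofReal p • Measure.dirac (μ / p)) := by
  classical
  have hne : Nonempty (Fin n) := ⟨⟨0, by omega⟩⟩
  set i0 : Fin n := ⟨0, by omega⟩ with hi0def
  set i1 : Fin n := ⟨1, by omega⟩ with hi1def
  have hi01 : i0 ≠ i1 := by
    simp only [hi0def, hi1def, ne_eq, Fin.mk.injEq]
    omega
  set M : Ω → ℝ := fun ω => ⨅ i, X i ω with hMdef
  have hM_meas : Measurable M := Measurable.iInf hmeas
  have hM_le : ∀ ω i, M ω ≤ X i ω := fun ω i => ciInf_le (Finite.bddBelow_range _) i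
  have hM_nonneg : ∀ ω, 0 ≤ M ω := fun ω => le_ciInf fun i => hnonneg i ω
  have hcard : (Finset.univ : Finset (Fin n)).card = n := by simp
  have hpt : ∀ ω, M ω ^ n ≤ ∏ i, X i ω := by
    intro ω
    calc M ω ^ n = ∏ _i : Fin n, M ω := by rw [Finset.prod_const, hcard]
      _ ≤ ∏ i, X i ω := Finset.prod_le_prod (fun _ _ => hM_nonneg ω) (fun i _ => hM_le ω i)
  obtain ⟨hPint, hPeq0⟩ := aux_prod_integral P X hindep hmeas hint Finset.univ
  have hPeq : ∫ ω, ∏ i, X i ω ∂P = μ ^ n := by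
    rw [hPeq0]
    simp only [hmean, Finset.prod_const, hcard]
  have hMn_meas : Measurable fun ω => M ω ^ n := hM_meas.pow_const n
  have hMn_int : Integrable (fun ω => M ω ^ n) P := by
    refine hPint.mono hMn_meas.aestronglyMeasurable (ae_of_all _ fun ω => ?_)
    rw [Real.norm_eq_abs, Real.norm_eq_abs, abs_of_nonneg (pow_nonneg (hM_nonneg ω) n)]
    exact le_trans (hpt ω) (le_abs_self _)
  have hineq : ∫ ω, M ω ^ n ∂P ≤ μ ^ n := by
    rw [← hPeq]
    exact integral_mono hMn_int hPint fun ω => hpt ω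
  refine ⟨hineq, ?_, ?_⟩
  · -- forward direction
    intro heq
    have hae : ∀ᵐ ω ∂P, M ω ^ n = ∏ i, X i ω := by
      have hsub : Integrable (fun ω => ∏ i, X i ω - M ω ^ n) P := hPint.sub hMn_int
      have hzero : ∫ ω, (∏ i, X i ω - M ω ^ n) ∂P = 0 := by
        rw [integral_sub hPint hMn_int, hPeq, heq, sub_self]
      have h := (integral_eq_zero_iff_of_nonneg_ae
        (ae_of_all _ fun ω => sub_nonneg.2 (hpt ω)) hsub).1 hzero
      filter_upwards [h] with ω hω
      have h2 : ∏ i, X i ω - M ω ^ n = 0 := hω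
      linarith
    have hkey : ∀ᵐ ω ∂P, (∀ i, 0 < X i ω) → X i0 ω = X i1 ω := by
      filter_upwards [hae] with ω hω hpos
      obtain ⟨j, hj⟩ := exists_eq_ciInf_of_finite (f := fun i => X i ω)
      have hMpos : 0 < M ω := by
        have h3 : (0:ℝ) < ⨅ i, X i ω := hj ▸ hpos j
        exact h3
      have hallj := aux_eq_of_prod (fun i => X i ω) (M ω) hMpos (fun i => hM_le ω i) hω.symm
      exact (hallj i0).trans (hallj i1).symm
    have hPM : IsProbabilityMeasure (Measure.map (X i0) P) :=
      Measure.isProbabilityMeasure_map (hmeas i0).aemeasurable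
    set ν : Measure ℝ := Measure.map (X i0) P with hνdef
    have hpre : ∀ i (s : Set ℝ), MeasurableSet s → P (X i ⁻¹' s) = ν s := by
      intro i s hs
      rw [hνdef, ← (hident i i0).map_eq, Measure.map_apply (hmeas i) hs]
    set q : ENNReal := ν (Set.Ioi 0) with hqdef
    have hq_top : q ≠ ⊤ := by rw [hqdef]; exact (measure_lt_top ν _).ne
    have hq_le : q ≤ 1 := by rw [hqdef]; exact prob_le_one
    have hq_ne : q ≠ 0 := by
      intro h0
      have hz0 : P (X i0 ⁻¹' Set.Ioi 0) = 0 := by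
        rw [hpre i0 _ measurableSet_Ioi, ← hqdef]; exact h0
      have hz : ∀ᵐ ω ∂P, X i0 ω = 0 := by
        rw [ae_iff]
        refine measure_mono_null ?_ hz0
        intro ω hω
        exact lt_of_le_of_ne (hnonneg i0 ω) (Ne.symm hω)
      have hi : ∫ ω, X i0 ω ∂P = 0 := by
        rw [integral_congr_ae hz]
        exact integral_zero _ _
      rw [hmean i0] at hi
      exact absurd hi (ne_of_gt hμ)
    -- grouping independence
    set S : Finset (Fin n) := {i0, i1} with hSdef
    set T : Finset (Fin n) := Finset.univ \ S with hTdef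
    have hST : Disjoint S T := Finset.disjoint_sdiff
    have hIF := hindep.indepFun_finset S T hST hmeas
    have hi0S : i0 ∈ S := by simp [hSdef]
    have hi1S : i1 ∈ S := by simp [hSdef]
    set DS : Set (↥S → ℝ) := (fun f : ↥S → ℝ => f ⟨i0, hi0S⟩) ⁻¹' Set.Ioi 0 ∩
        ((fun f : ↥S → ℝ => f ⟨i1, hi1S⟩) ⁻¹' Set.Ioi 0 ∩
          {f : ↥S → ℝ | f ⟨i0, hi0S⟩ = f ⟨i1, hi1S⟩}ᶜ) with hDSdef
    set BT : Set (↥T → ℝ) := ⋂ i : ↥T, (fun f : ↥T → ℝ => f i) ⁻¹' Set.Ioi 0 with hBTdef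
    have hm0 : Measurable fun f : ↥S → ℝ => f ⟨i0, hi0S⟩ := measurable_pi_apply _
    have hm1 : Measurable fun f : ↥S → ℝ => f ⟨i1, hi1S⟩ := measurable_pi_apply _
    have hDSm : MeasurableSet DS :=
      (hm0 measurableSet_Ioi).inter
        ((hm1 measurableSet_Ioi).inter (measurableSet_eq_fun hm0 hm1).compl)
    have hBTm : MeasurableSet BT :=
      MeasurableSet.iInter fun i => (measurable_pi_apply i) measurableSet_Ioi
    have hDB := hIF.measure_inter_preimage_eq_mul DS BT hDSm hBTm
    have hpre1 : (fun ω (i : ↥S) => X i ω) ⁻¹' DS =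
        {ω | 0 < X i0 ω ∧ 0 < X i1 ω ∧ X i0 ω ≠ X i1 ω} := rfl
    have hpre2 : (fun ω (i : ↥T) => X i ω) ⁻¹' BT = ⋂ i ∈ T, X i ⁻¹' Set.Ioi 0 := by
      ext ω
      simp [hBTdef, Set.mem_iInter, Subtype.forall]
    have hBval : P ((fun ω (i : ↥T) => X i ω) ⁻¹' BT) ≠ 0 := by
      rw [hpre2, hindep.meas_biInter (fun i _ => ⟨Set.Ioi 0, measurableSet_Ioi, rfl⟩)]
      refine Finset.prod_ne_zero_iff.2 fun i _ => ?_
      rw [hpre i _ measurableSet_Ioi, ← hqdef]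
      exact hq_ne
    have hzero2 : P ((fun ω (i : ↥S) => X i ω) ⁻¹' DS ∩ (fun ω (i : ↥T) => X i ω) ⁻¹' BT) = 0 := by
      refine measure_mono_null ?_ (by rw [ae_iff] at hkey; exact hkey)
      rintro ω ⟨h1, h2⟩
      rw [hpre1] at h1
      rw [hpre2] at h2
      obtain ⟨hp0, hp1, hne'⟩ := h1
      intro hcon
      apply hne'
      apply hcon
      intro i
      by_cases hiT : i ∈ T
      · exact Set.mem_iInter₂.1 h2 i hiT
      · have hiS : i = i0 ∨ i = i1 := by
          rw [hTdef] at hiT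
          simp [hSdef] at hiT
          tauto
        rcases hiS with rfl | rfl
        · exact hp0
        · exact hp1
    have hD0 : P {ω | 0 < X i0 ω ∧ 0 < X i1 ω ∧ X i0 ω ≠ X i1 ω} = 0 := by
      rw [← hpre1]
      rw [hDB] at hzero2
      rcases mul_eq_zero.1 hzero2 with h | h
      · exact h
      · exact absurd h hBval
    -- pair law
    have hpairlaw : Measure.map (fun ω => (X i0 ω, X i1 ω)) P = ν.prod ν := by
      have h := (indepFun_iff_map_prod_eq_prod_map_map (hmeas i0).aemeasurable
        (hmeas i1).aemeasurable).1 (hindep.indepFun hi01)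
      rw [h, (hident i1 i0).map_eq]
    set DP : Set (ℝ × ℝ) := (Prod.fst ⁻¹' Set.Ioi 0) ∩
        ((Prod.snd ⁻¹' Set.Ioi (0:ℝ)) ∩ (Set.diagonal ℝ)ᶜ) with hDPdef
    have hDPm : MeasurableSet DP :=
      (measurable_fst measurableSet_Ioi).inter
        ((measurable_snd measurableSet_Ioi).inter isClosed_diagonal.measurableSet.compl)
    have hννD : (ν.prod ν) DP = 0 := by
      rw [← hpairlaw, Measure.map_apply ((hmeas i0).prodMk (hmeas i1)) hDPm]
      have hpre3 : (fun ω => (X i0 ω, X i1 ω)) ⁻¹' DP =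
          {ω | 0 < X i0 ω ∧ 0 < X i1 ω ∧ X i0 ω ≠ X i1 ω} := by
        ext ω
        simp [hDPdef, Set.diagonal]
      rw [hpre3]
      exact hD0
    set mres : Measure ℝ := ν.restrict (Set.Ioi 0) with hmresdef
    have hmres_univ : mres Set.univ = q := by
      rw [hmresdef, Measure.restrict_apply_univ, hqdef]
    have hdiag : MeasurableSet {p : ℝ × ℝ | p.1 ≠ p.2} :=
      isClosed_diagonal.measurableSet.compl
    have hprod0 : (mres.prod mres) {p : ℝ × ℝ | p.1 ≠ p.2} = 0 := by
      rw [hmresdef, Measure.prod_restrict, Measure.restrict_apply hdiag]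
      have hseteq : {p : ℝ × ℝ | p.1 ≠ p.2} ∩ Set.Ioi 0 ×ˢ Set.Ioi 0 = DP := by
        ext pp
        simp [hDPdef, Set.mem_prod, Set.diagonal]
        tauto
      rw [hseteq]
      exact hννD
    obtain ⟨c, hc⟩ := aux_dirac (by rw [hmres_univ]; exact hq_ne) hprod0
    have hmres_c : mres {c} = q := by
      have h := measure_add_measure_compl (μ := mres) (measurableSet_singleton c)
      rw [hc, add_zero, hmres_univ] at h
      exact h
    have hc_pos : 0 < c := by
      by_contra hcp
      have hz : mres {c} = 0 := by
        rw [hmresdef, Measure.restrict_apply (measurableSet_singleton c)]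
        have he : ({c} : Set ℝ) ∩ Set.Ioi 0 = ∅ := by
          ext x
          simp only [Set.mem_inter_iff, Set.mem_singleton_iff, Set.mem_Ioi,
            Set.mem_empty_iff_false, iff_false, not_and]
          rintro rfl
          exact fun hx => hcp hx
        rw [he, measure_empty]
      rw [hz] at hmres_c
      exact hq_ne hmres_c.symm
    have hν_c : ν {c} = q := by
      have h : mres {c} = ν {c} := by
        rw [hmresdef, Measure.restrict_apply (measurableSet_singleton c)]
        congr 1
        exact Set.inter_eq_self_of_subset_left (by simpa using hc_pos)
      rw [← h]
      exact hmres_c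
    have hν_Ioi_diff : ν (Set.Ioi 0 \ {c}) = 0 := by
      have h := hc
      rw [hmresdef, Measure.restrict_apply (measurableSet_singleton c).compl] at h
      have he : ({c} : Set ℝ)ᶜ ∩ Set.Ioi 0 = Set.Ioi 0 \ {c} := by
        ext x
        simp [Set.mem_diff]
        tauto
      rw [he] at h
      exact h
    have hν_neg : ν (Set.Iio 0) = 0 := by
      rw [← hpre i0 _ measurableSet_Iio]
      have he : X i0 ⁻¹' Set.Iio 0 = ∅ := by
        ext ω
        simp only [Set.mem_preimage, Set.mem_Iio, Set.mem_empty_iff_false, iff_false, not_lt]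
        exact hnonneg i0 ω
      rw [he, measure_empty]
    have hν0 : ν {0} = 1 - q := by
      have h1 : ν (Set.Ici 0) = 1 := by
        have hcompl := measure_add_measure_compl (μ := ν) (measurableSet_Ici (a := (0:ℝ)))
        rw [measure_univ, show (Set.Ici (0:ℝ))ᶜ = Set.Iio 0 from by ext x; simp,
          hν_neg, add_zero] at hcompl
        exact hcompl
      have h2 : (Set.Ici (0:ℝ)) = {0} ∪ Set.Ioi 0 := by
        ext x
        simp only [Set.mem_Ici, Set.mem_union, Set.mem_singleton_iff, Set.mem_Ioi]
        constructor
        · intro h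
          rcases eq_or_lt_of_le h with h' | h'
          · exact Or.inl h'.symm
          · exact Or.inr h'
        · rintro (rfl | h)
          · exact le_refl _
          · exact le_of_lt h
      have hdis : Disjoint ({0} : Set ℝ) (Set.Ioi 0) := by
        refine Set.disjoint_left.2 fun x hx hx2 => ?_
        simp only [Set.mem_singleton_iff] at hx
        rw [hx] at hx2
        exact lt_irrefl _ (Set.mem_Ioi.1 hx2)
      have h3 : ν {0} + ν (Set.Ioi 0) = 1 := by
        rw [← measure_union hdis measurableSet_Ioi, ← h2, h1]
      rw [← hqdef] at h3
      exact ENNReal.eq_sub_of_add_eq hq_top h3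
    have hν_form : ν = (1 - q) • Measure.dirac (0:ℝ) + q • Measure.dirac c := by
      ext s hs
      have hd0 : Measure.dirac (0:ℝ) s = Set.indicator s 1 0 := Measure.dirac_apply' _ hs
      have hdc : Measure.dirac c s = Set.indicator s 1 c := Measure.dirac_apply' _ hs
      have hsplit1 : ν s = ν (s ∩ ({0} ∪ Set.Ioi 0)) := by
        refine (measure_inter_conull ?_).symm
        rw [show (({0} : Set ℝ) ∪ Set.Ioi 0)ᶜ = Set.Iio 0 from by
          ext x
          simp only [Set.mem_compl_iff, Set.mem_union, Set.mem_singleton_iff, Set.mem_Ioi,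
            not_or, not_lt, Set.mem_Iio]
          constructor
          · rintro ⟨h1, h2⟩
            exact lt_of_le_of_ne h2 h1
          · intro h
            exact ⟨ne_of_lt h, le_of_lt h⟩]
        exact hν_neg
      have hdis2 : Disjoint (s ∩ {0}) (s ∩ Set.Ioi 0) := by
        refine Set.disjoint_left.2 fun x hx hx2 => ?_
        obtain ⟨_, hx0⟩ := hx
        obtain ⟨_, hxI⟩ := hx2
        simp only [Set.mem_singleton_iff] at hx0
        rw [hx0] at hxI
        exact lt_irrefl _ (Set.mem_Ioi.1 hxI)
      have hsplit2 : ν s = ν (s ∩ {0}) + ν (s ∩ Set.Ioi 0) := by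
        rw [hsplit1, Set.inter_union_distrib_left,
          measure_union hdis2 (hs.inter measurableSet_Ioi)]
      have hIoi_eval : ν (s ∩ Set.Ioi 0) = ν (s ∩ {c}) := by
        have hnull : ν ((s ∩ Set.Ioi 0) \ {c}) = 0 := by
          refine measure_mono_null (fun x hx => ?_) hν_Ioi_diff
          obtain ⟨⟨hxs, hxI⟩, hxc⟩ := hx
          exact ⟨hxI, hxc⟩
        rw [← measure_inter_conull' hnull]
        congr 1
        ext x
        simp only [Set.mem_inter_iff, Set.mem_singleton_iff, Set.mem_Ioi]
        constructor
        · rintro ⟨⟨hxs, _⟩, hxc⟩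
          exact ⟨hxs, hxc⟩
        · rintro ⟨hxs, rfl⟩
          exact ⟨⟨hxs, hc_pos⟩, rfl⟩
      have e0 : ν (s ∩ {0}) = if (0:ℝ) ∈ s then 1 - q else 0 := by
        by_cases h0s : (0:ℝ) ∈ s
        · rw [if_pos h0s, Set.inter_eq_self_of_subset_right (by simpa using h0s), hν0]
        · have hemp : s ∩ {0} = (∅ : Set ℝ) := by
            refine Set.eq_empty_iff_forall_notMem.2 fun x hx => ?_
            obtain ⟨hxs, hx0⟩ := hx
            simp only [Set.mem_singleton_iff] at hx0
            rw [hx0] at hxs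
            exact h0s hxs
          rw [if_neg h0s, hemp, measure_empty]
      have ec : ν (s ∩ {c}) = if c ∈ s then q else 0 := by
        by_cases hcs : c ∈ s
        · rw [if_pos hcs, Set.inter_eq_self_of_subset_right (by simpa using hcs), hν_c]
        · have hemp : s ∩ {c} = (∅ : Set ℝ) := by
            refine Set.eq_empty_iff_forall_notMem.2 fun x hx => ?_
            obtain ⟨hxs, hx0⟩ := hx
            simp only [Set.mem_singleton_iff] at hx0
            rw [hx0] at hxs
            exact hcs hxs
          rw [if_neg hcs, hemp, measure_empty]
      rw [hsplit2, hIoi_eval, e0, ec]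
      simp only [Measure.coe_add, Pi.add_apply, Measure.smul_apply, smul_eq_mul, hd0, hdc,
        Set.indicator_apply, Pi.one_apply]
      by_cases h0s : (0:ℝ) ∈ s <;> by_cases hcs : c ∈ s <;> simp [h0s, hcs]
    -- compute the mean
    have hXc : ∀ᵐ ω ∂P, X i0 ω ∈ ({0, c} : Set ℝ) := by
      have hment : MeasurableSet (({0, c} : Set ℝ)ᶜ) :=
        ((measurableSet_singleton c).insert 0).compl
      have h0 : P (X i0 ⁻¹' ({0, c} : Set ℝ)ᶜ) = 0 := by
        rw [hpre i0 _ hment, hν_form]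
        simp [Measure.dirac_apply' _ hment, Set.indicator_apply]
      rw [ae_iff]
      exact h0
    have hint_c : ∫ ω, X i0 ω ∂P = q.toReal * c := by
      have hXae : X i0 =ᵐ[P] fun ω => Set.indicator (X i0 ⁻¹' {c}) (fun _ => c) ω := by
        filter_upwards [hXc] with ω hω
        rcases hω with h | h
        · rw [Set.indicator_apply]
          rw [if_neg]
          · exact h
          · simp only [Set.mem_preimage, Set.mem_singleton_iff, h]
            exact fun hh => (ne_of_gt hc_pos) hh.symm
        · simp only [Set.mem_singleton_iff] at h
          rw [Set.indicator_apply, if_pos]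
          · exact h
          · simp only [Set.mem_preimage, Set.mem_singleton_iff]
            exact h
      rw [integral_congr_ae hXae,
        integral_indicator_const (c : ℝ) ((hmeas i0) (measurableSet_singleton c)),
        Measure.real_def, hpre i0 _ (measurableSet_singleton c), hν_c]
      simp [smul_eq_mul]
    have hμ_pc : μ = q.toReal * c := by
      rw [← hmean i0]
      exact hint_c
    refine ⟨q.toReal, ENNReal.toReal_pos hq_ne hq_top, ?_, ?_⟩
    · have h := ENNReal.toReal_mono (by simp) hq_le
      simpa using h
    · have hp_pos : 0 < q.toReal := ENNReal.toReal_pos hq_ne hq_top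
      have hc_eq : μ / q.toReal = c := by
        rw [hμ_pc]
        exact mul_div_cancel_left₀ c (ne_of_gt hp_pos)
      have hof1 : ENNReal.ofReal (1 - q.toReal) = 1 - q := by
        rw [show (1:ℝ) = (1:ENNReal).toReal from by simp,
          ← ENNReal.toReal_sub_of_le hq_le (by simp),
          ENNReal.ofReal_toReal (ENNReal.sub_ne_top (by simp))]
      have hofp : ENNReal.ofReal q.toReal = q := ENNReal.ofReal_toReal hq_top
      rw [hof1, hofp, hc_eq]
      exact hν_form
  · -- backward direction
    rintro ⟨p, hp_pos, hp_le, hform⟩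
    set c : ℝ := μ / p with hcdef
    have hc_pos : 0 < c := div_pos hμ hp_pos
    have hc_ne : c ≠ 0 := ne_of_gt hc_pos
    have hmap : ∀ i, Measure.map (X i) P =
        ENNReal.ofReal (1 - p) • Measure.dirac (0:ℝ) + ENNReal.ofReal p • Measure.dirac c := by
      intro i
      rw [(hident i i0).map_eq]
      exact hform
    have hment : MeasurableSet (({0, c} : Set ℝ)ᶜ) :=
      ((measurableSet_singleton c).insert 0).compl
    have hae2 : ∀ᵐ ω ∂P, ∀ i, X i ω ∈ ({0, c} : Set ℝ) := by
      rw [ae_all_iff]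
      intro i
      have h0 : P (X i ⁻¹' ({0, c} : Set ℝ)ᶜ) = 0 := by
        rw [← Measure.map_apply (hmeas i) hment, hmap i]
        simp [Measure.dirac_apply' _ hment, Set.indicator_apply]
      rw [ae_iff]
      exact h0
    have haeeq : (fun ω => M ω ^ n) =ᵐ[P] fun ω => ∏ i, X i ω := by
      filter_upwards [hae2] with ω hω
      by_cases hex : ∃ i, X i ω = 0
      · obtain ⟨i, hi⟩ := hex
        have hM0 : M ω = 0 := le_antisymm (hi ▸ hM_le ω i) (hM_nonneg ω)
        rw [hM0, Finset.prod_eq_zero (Finset.mem_univ i) hi, zero_pow (by omega)]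
      · have hall : ∀ i, X i ω = c := by
          intro i
          rcases hω i with h | h
          · exact absurd ⟨i, h⟩ hex
          · exact h
        have hMc : M ω = c := by
          have : M ω = ⨅ _i : Fin n, c := iInf_congr hall
          rw [this, ciInf_const]
        rw [hMc, Finset.prod_congr rfl fun i _ => hall i, Finset.prod_const, hcard]
    rw [integral_congr_ae haeeq, hPeq]
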